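/- If π is a permutation of [m] and (P(π), Q(π)) is its RSK pair, then P(π⁻¹) = Q(π) and Q(π⁻¹) = P(π). -/

import Mathlib

/-- Row-insert `x` into a single row: either append at the end, or bump the
smallest entry greater than `x`. Returns the new row and the bumped value. -/
def insertInRow (row : List ℕ) (x : ℕ) : List ℕ × Option ℕ :=
  match row.findIdx? (fun y => decide (x < y)) with
  | none => (row ++ [x], none)
  | some i => (row.set i x, row[i]?)

/-- RSK row-insertion (bumping) of `x` into a tableau given as its list of rows. -/
def rowInsertT : List (List ℕ) → ℕ → List (List ℕ)
  | [], x => [[x]]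
  | r :: rs, x =>
    match insertInRow r x with
    | (r', none) => r' :: rs
    | (r', some y) => r' :: rowInsertT rs y

/-- The shape of a tableau: the list of its row lengths. -/
def shapeT (T : List (List ℕ)) : List ℕ := T.map List.length

/-- The number of columns of a tableau: the length of its first row. -/
def numCols (T : List (List ℕ)) : ℕ := (T.getD 0 []).length

/-- The insertion tableau `P` of a word, built by successive row-insertions. -/
def rskP (l : List ℕ) : List (List ℕ) := l.foldl rowInsertT []

/-- The index of the row in which row-inserting `x` into `T` creates a new box. -/
def newBoxRow (T : List (List ℕ)) (x : ℕ) : ℕ :=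
  (List.range (rowInsertT T x).length).findIdx
    (fun i => decide ((T.getD i []).length < ((rowInsertT T x).getD i []).length))

/-- The (row, column) position (0-indexed) of the new box created by
row-inserting `x` into `T`. -/
def newBox (T : List (List ℕ)) (x : ℕ) : ℕ × ℕ :=
  (newBoxRow T x, ((rowInsertT T x).getD (newBoxRow T x) []).length - 1)

/-- One step of the full RSK algorithm on the pair `(P, Q)`: insert the value
`xi.1` into `P` and record the label `xi.2` in `Q` at the newly created box. -/
def rskStep (PQ : List (List ℕ) × List (List ℕ)) (xi : ℕ × ℕ) :
    List (List ℕ) × List (List ℕ) :=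
  let r := newBoxRow PQ.1 xi.1
  (rowInsertT PQ.1 xi.1,
    if r < PQ.2.length then PQ.2.set r (PQ.2.getD r [] ++ [xi.2]) else PQ.2 ++ [[xi.2]])

/-- The RSK pair `(P, Q)` of a word (the `i`-th letter gets recording label `i`). -/
def rskPQ (l : List ℕ) : List (List ℕ) × List (List ℕ) :=
  (l.zip (List.range' 1 l.length)).foldl rskStep ([], [])

/-- `T` is a standard Young tableau with entries `{1, …, m}`, given as its list of
rows: no empty rows, weakly decreasing row lengths, rows strictly increasing left
to right, columns strictly increasing top to bottom, and the entries are exactly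
`1, …, m`. -/
def isSYT (m : ℕ) (T : List (List ℕ)) : Prop :=
  [] ∉ T ∧
  List.Chain' (fun a b => b.length ≤ a.length) T ∧
  (∀ r ∈ T, List.Chain' (· < ·) r) ∧
  (∀ i j : ℕ, j < (T.getD (i + 1) []).length →
      (T.getD i []).getD j 0 < (T.getD (i + 1) []).getD j 0) ∧
  T.flatten.Perm (List.range' 1 m)

/-- The one-line word of a permutation of `Fin m`, with values in `{1, …, m}`. -/
def permList {m : ℕ} (π : Equiv.Perm (Fin m)) : List ℕ :=
  (List.finRange m).map (fun i => (π i : ℕ) + 1)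

section Dev
open List

/-- Add a box containing `a` at the end of row `i` (or start a new row `[[a]]`
if `i` is the number of rows). -/
def addBox (T : List (List ℕ)) (i : ℕ) (a : ℕ) : List (List ℕ) :=
  if i < T.length then T.set i (T.getD i [] ++ [a]) else T ++ [[a]]

lemma rskStep_eq (PQ : List (List ℕ) × List (List ℕ)) (xi : ℕ × ℕ) :
    rskStep PQ xi = (rowInsertT PQ.1 xi.1, addBox PQ.2 (newBoxRow PQ.1 xi.1) xi.2) := rfl

lemma addBox_cons_succ (row : List ℕ) (T : List (List ℕ)) (i a : ℕ) :
    addBox (row :: T) (i + 1) a = row :: addBox T i a := by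
  unfold addBox
  by_cases h : i < T.length
  · simp [h, Nat.succ_lt_succ h]
  · simp [h, fun hh => h (Nat.lt_of_succ_lt_succ hh)]

lemma addBox_cons_zero (row : List ℕ) (T : List (List ℕ)) (a : ℕ) :
    addBox (row :: T) 0 a = (row ++ [a]) :: T := by
  simp [addBox]

lemma addBox_nil (i a : ℕ) : addBox [] i a = [[a]] := by simp [addBox]

lemma length_addBox (T : List (List ℕ)) (i a : ℕ) (h : i ≤ T.length) :
    (addBox T i a).length = if i < T.length then T.length else T.length + 1 := by
  unfold addBox; split <;> simp

/-- spec of findIdx? (some case) -/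
lemma findIdx?_some_spec {p : ℕ → Bool} : ∀ (l : List ℕ) (i : ℕ),
    l.findIdx? p = some i →
    i < l.length ∧ p (l.getD i 0) = true ∧ ∀ j < i, p (l.getD j 0) = false := by
  intro l
  induction l with
  | nil => intro i h; simp at h
  | cons a l ih =>
    intro i h
    rw [List.findIdx?_cons] at h
    by_cases hp : p a
    · simp [hp] at h
      subst h
      refine ⟨Nat.succ_pos _, by simpa using hp, by omega⟩
    · simp only [hp, if_neg, Bool.false_eq_true, if_false] at h
      simp only [Option.map_eq_some_iff] at h
      obtain ⟨j, hj, rfl⟩ := h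
      obtain ⟨h1, h2, h3⟩ := ih j hj
      refine ⟨by simpa using h1, by simpa using h2, ?_⟩
      intro k hk
      cases k with
      | zero => simpa using hp
      | succ k => simpa using h3 k (by omega)

lemma findIdx?_none_spec {p : ℕ → Bool} {l : List ℕ}
    (h : l.findIdx? p = none) : ∀ a ∈ l, p a = false :=
  List.findIdx?_eq_none_iff.mp h

/-- rowInsertT unfoldings -/
lemma rowInsertT_nil (x : ℕ) : rowInsertT [] x = [[x]] := rfl

lemma rowInsertT_cons_none {row : List ℕ} {x : ℕ}
    (h : row.findIdx? (fun y => decide (x < y)) = none) (rest : List (List ℕ)) :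
    rowInsertT (row :: rest) x = (row ++ [x]) :: rest := by
  simp [rowInsertT, insertInRow, h]

lemma rowInsertT_cons_some {row : List ℕ} {x i : ℕ}
    (h : row.findIdx? (fun y => decide (x < y)) = some i) (rest : List (List ℕ)) :
    rowInsertT (row :: rest) x = row.set i x :: rowInsertT rest (row.getD i 0) := by
  have hi : i < row.length := (findIdx?_some_spec row i h).1
  have : row[i]? = some (row.getD i 0) := by
    rw [List.getD_eq_getElem?_getD]
    cases hh : row[i]? with
    | none => simp [List.getElem?_eq_none_iff] at hh; omega
    | some v => simp
  have h1 : insertInRow row x = (row.set i x, some (row.getD i 0)) := by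
    unfold insertInRow
    rw [h]
    simpa using this
  show (match insertInRow row x with
    | (r', none) => r' :: rest
    | (r', some y) => r' :: rowInsertT rest y) = _
  rw [h1]

lemma findIdx_map (p : ℕ → Bool) (f : ℕ → ℕ) : ∀ l : List ℕ,
    (l.map f).findIdx p = l.findIdx (fun a => p (f a))
  | [] => rfl
  | a :: l => by
    rw [List.map_cons, List.findIdx_cons, List.findIdx_cons, findIdx_map p f l]

lemma newBoxRow_nil (x : ℕ) : newBoxRow [] x = 0 := by
  have : (rowInsertT [] x).length = 1 := by simp [rowInsertT_nil]
  rw [newBoxRow, this, List.range_succ_eq_map, List.findIdx_cons]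
  simp [rowInsertT_nil]

lemma newBoxRow_cons_none {row : List ℕ} {x : ℕ}
    (h : row.findIdx? (fun y => decide (x < y)) = none) (rest : List (List ℕ)) :
    newBoxRow (row :: rest) x = 0 := by
  unfold newBoxRow
  rw [rowInsertT_cons_none h]
  have hlen : ((row ++ [x]) :: rest).length = rest.length + 1 := by simp
  rw [hlen, List.range_succ_eq_map, List.findIdx_cons]
  simp

lemma newBoxRow_cons_some {row : List ℕ} {x i : ℕ}
    (h : row.findIdx? (fun y => decide (x < y)) = some i) (rest : List (List ℕ)) :
    newBoxRow (row :: rest) x = newBoxRow rest (row.getD i 0) + 1 := by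
  have hi : i < row.length := (findIdx?_some_spec row i h).1
  unfold newBoxRow
  rw [rowInsertT_cons_some h]
  have hlen : (row.set i x :: rowInsertT rest (row.getD i 0)).length
      = (rowInsertT rest (row.getD i 0)).length + 1 := by simp
  rw [hlen, List.range_succ_eq_map, List.findIdx_cons]
  have h0 : (decide ((((row :: rest).getD 0 []).length <
      ((row.set i x :: rowInsertT rest (row.getD i 0)).getD 0 []).length))) = false := by
    simp
  rw [h0]
  simp only [cond_false, _root_.findIdx_map, Nat.succ_eq_add_one, Nat.add_left_inj]
  congr 1

lemma newBoxRow_le (x : ℕ) : ∀ T : List (List ℕ), newBoxRow T x ≤ T.length := by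
  intro T
  induction T generalizing x with
  | nil => simp [newBoxRow_nil]
  | cons row rest ih =>
    cases h : row.findIdx? (fun y => decide (x < y)) with
    | none => simp [newBoxRow_cons_none h]
    | some i =>
      rw [newBoxRow_cons_some h]
      simpa using ih _

def bumpShape (s : List ℕ) (i : ℕ) : List ℕ :=
  if i < s.length then s.set i (s.getD i 0 + 1) else s ++ [1]

lemma bumpShape_cons_succ (a : ℕ) (s : List ℕ) (n : ℕ) :
    bumpShape (a :: s) (n + 1) = a :: bumpShape s n := by
  unfold bumpShape
  by_cases h : n < s.length
  · simp [h, Nat.succ_lt_succ h]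
  · simp [h, fun hh => h (Nat.lt_of_succ_lt_succ hh)]

lemma shapeT_getD (T : List (List ℕ)) (i : ℕ) :
    (shapeT T).getD i 0 = (T.getD i []).length := by
  rw [List.getD_eq_getElem?_getD, List.getD_eq_getElem?_getD, shapeT, List.getElem?_map]
  cases T[i]? <;> simp

lemma shapeT_addBox (T : List (List ℕ)) (i a : ℕ) :
    shapeT (addBox T i a) = bumpShape (shapeT T) i := by
  unfold addBox bumpShape
  have hl : (shapeT T).length = T.length := by simp [shapeT]
  by_cases h : i < T.length
  · rw [if_pos h, if_pos (by omega)]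
    simp only [shapeT, List.map_set]
    congr 1
    rw [List.getD_eq_getElem?_getD, List.getD_eq_getElem?_getD, List.getElem?_map]
    cases T[i]? <;> simp
  · rw [if_neg h, if_neg (by omega)]
    simp [shapeT]

lemma shapeT_rowInsertT (x : ℕ) : ∀ T : List (List ℕ),
    shapeT (rowInsertT T x) = bumpShape (shapeT T) (newBoxRow T x) := by
  intro T
  induction T generalizing x with
  | nil => simp [rowInsertT_nil, newBoxRow_nil, shapeT, bumpShape]
  | cons row rest ih =>
    cases h : row.findIdx? (fun y => decide (x < y)) with
    | none =>
      rw [rowInsertT_cons_none h, newBoxRow_cons_none h]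
      simp [shapeT, bumpShape]
    | some i =>
      have hi : i < row.length := (findIdx?_some_spec row i h).1
      rw [rowInsertT_cons_some h, newBoxRow_cons_some h,
        show shapeT (row :: rest) = row.length :: shapeT rest from rfl, bumpShape_cons_succ]
      have := ih (row.getD i 0)
      simp only [shapeT, List.getD_eq_getElem?_getD] at this ⊢
      simp [this]
lemma insertInRow_none {row : List ℕ} {x : ℕ}
    (h : row.findIdx? (fun y => decide (x < y)) = none) :
    insertInRow row x = (row ++ [x], none) := by
  simp [insertInRow, h]

lemma insertInRow_some {row : List ℕ} {x i : ℕ}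
    (h : row.findIdx? (fun y => decide (x < y)) = some i) :
    insertInRow row x = (row.set i x, some (row.getD i 0)) := by
  have hi : i < row.length := (findIdx?_some_spec row i h).1
  have hg : row[i]? = some (row.getD i 0) := by
    rw [List.getD_eq_getElem?_getD]
    cases hh : row[i]? with
    | none => simp [List.getElem?_eq_none_iff] at hh; omega
    | some v => simp
  unfold insertInRow
  rw [h]
  simpa using hg

/-- Partial bumping: perform the first `r` bumping steps of a row insertion,
requiring that each of the first `r` rows actually bumps. Returns the new
first `r` rows (with the rest unchanged) and the currently carried value. -/
def bumpPartial : List (List ℕ) → ℕ → ℕ → Option (List (List ℕ) × ℕ)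
  | T, x, 0 => some (T, x)
  | [], _, _+1 => none
  | row :: rest, x, r+1 =>
    match insertInRow row x with
    | (_, none) => none
    | (row', some y) => (bumpPartial rest y r).map (fun Tz => (row' :: Tz.1, Tz.2))

lemma bumpPartial_zero (T : List (List ℕ)) (x : ℕ) : bumpPartial T x 0 = some (T, x) := by cases T <;> rfl

lemma bumpPartial_cons_some {row : List ℕ} {x i : ℕ}
    (h : row.findIdx? (fun y => decide (x < y)) = some i) (rest : List (List ℕ)) (r : ℕ) :
    bumpPartial (row :: rest) x (r + 1)
      = (bumpPartial rest (row.getD i 0) r).map (fun Tz => (row.set i x :: Tz.1, Tz.2)) := by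
  show (match insertInRow row x with
    | (_, none) => none
    | (row', some y) => (bumpPartial rest y r).map (fun Tz : List (List ℕ) × ℕ => (row' :: Tz.1, Tz.2))) = _
  rw [insertInRow_some h]

lemma bumpPartial_cons_none {row : List ℕ} {x : ℕ}
    (h : row.findIdx? (fun y => decide (x < y)) = none) (rest : List (List ℕ)) (r : ℕ) :
    bumpPartial (row :: rest) x (r + 1) = none := by
  show (match insertInRow row x with
    | (_, none) => none
    | (row', some y) => (bumpPartial rest y r).map (fun Tz : List (List ℕ) × ℕ => (row' :: Tz.1, Tz.2))) = _
  rw [insertInRow_none h]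

lemma bumpPartial_spec : ∀ (r : ℕ) (T : List (List ℕ)) (x : ℕ) (T₁ : List (List ℕ)) (t : ℕ),
    bumpPartial T x r = some (T₁, t) → r ≤ T.length ∧ T₁.length = T.length := by
  intro r
  induction r with
  | zero => intro T x T₁ t h; rw [bumpPartial_zero] at h; cases h; simp
  | succ r ih =>
    intro T x T₁ t h
    match T with
    | [] => simp [bumpPartial] at h
    | row :: rest =>
      cases hf : row.findIdx? (fun y => decide (x < y)) with
      | none => rw [bumpPartial_cons_none hf] at h; simp at h
      | some i =>
        rw [bumpPartial_cons_some hf] at h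
        cases hb : bumpPartial rest (row.getD i 0) r with
        | none => rw [hb] at h; simp at h
        | some Tz =>
          rw [hb] at h
          simp only [Option.map_some] at h
          cases h
          obtain ⟨h1, h2⟩ := ih rest _ Tz.1 Tz.2 (by rw [hb])
          constructor
          · simpa using h1
          · simpa using h2
lemma getD_set_ne (T : List (List ℕ)) {i j : ℕ} (h : i ≠ j) (v : List ℕ) :
    (T.set i v).getD j [] = T.getD j [] := by
  rw [List.getD_eq_getElem?_getD, List.getD_eq_getElem?_getD, List.getElem?_set_ne h]

/-- completing a partial bump by a final append -/
lemma bumpPartial_rowInsertT : ∀ (r : ℕ) (T : List (List ℕ)) (x : ℕ)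
    (T₁ : List (List ℕ)) (t : ℕ),
    bumpPartial T x r = some (T₁, t) → (∀ a ∈ T.getD r [], a < t) →
    rowInsertT T x = addBox T₁ r t ∧ newBoxRow T x = r := by
  intro r
  induction r with
  | zero =>
    intro T x T₁ t h hlt
    rw [bumpPartial_zero] at h
    cases h
    match T with
    | [] => exact ⟨by rw [rowInsertT_nil, addBox_nil], newBoxRow_nil x⟩
    | row :: rest =>
      have hn : row.findIdx? (fun y => decide (x < y)) = none := by
        rw [List.findIdx?_eq_none_iff]
        intro a ha
        simp only [decide_eq_false_iff_not, not_lt]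
        exact Nat.le_of_lt (hlt a (by simpa using ha))
      exact ⟨by rw [rowInsertT_cons_none hn, addBox_cons_zero], newBoxRow_cons_none hn _⟩
  | succ r ih =>
    intro T x T₁ t h hlt
    match T with
    | [] => simp [bumpPartial] at h
    | row :: rest =>
      cases hf : row.findIdx? (fun y => decide (x < y)) with
      | none => rw [bumpPartial_cons_none hf] at h; simp at h
      | some i =>
        rw [bumpPartial_cons_some hf] at h
        cases hb : bumpPartial rest (row.getD i 0) r with
        | none => rw [hb] at h; simp at h
        | some Tz =>
          obtain ⟨T₁', t'⟩ := Tz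
          rw [hb] at h
          simp only [Option.map_some, Option.some_inj, Prod.mk.injEq] at h
          obtain ⟨rfl, rfl⟩ := h
          obtain ⟨h1, h2⟩ := ih rest (row.getD i 0) T₁' t' hb (by
            intro a ha; exact hlt a (by simpa using ha))
          constructor
          · rw [rowInsertT_cons_some hf, h1, addBox_cons_succ]
          · rw [newBoxRow_cons_some hf, h2]
/-- adding a box anywhere commutes with a partial bump -/
lemma bumpPartial_addBox : ∀ (r : ℕ) (T : List (List ℕ)) (x : ℕ)
    (T₁ : List (List ℕ)) (t i a : ℕ),
    bumpPartial T x r = some (T₁, t) →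
    bumpPartial (addBox T i a) x r = some (addBox T₁ i a, t) := by
  intro r
  induction r with
  | zero =>
    intro T x T₁ t i a h
    rw [bumpPartial_zero] at h
    cases h
    rw [bumpPartial_zero]
  | succ r ih =>
    intro T x T₁ t i a h
    match T with
    | [] => simp [bumpPartial] at h
    | row :: rest =>
      cases hf : row.findIdx? (fun y => decide (x < y)) with
      | none => rw [bumpPartial_cons_none hf] at h; simp at h
      | some k =>
        rw [bumpPartial_cons_some hf] at h
        cases hb : bumpPartial rest (row.getD k 0) r with
        | none => rw [hb] at h; simp at h
        | some Tz =>
          obtain ⟨T₁', t'⟩ := Tz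
          rw [hb] at h
          simp only [Option.map_some, Option.some_inj, Prod.mk.injEq] at h
          obtain ⟨rfl, rfl⟩ := h
          have hk : k < row.length := (findIdx?_some_spec row k hf).1
          cases i with
          | zero =>
            rw [addBox_cons_zero, addBox_cons_zero]
            have hf' : (row ++ [a]).findIdx? (fun y => decide (x < y)) = some k := by
              rw [List.findIdx?_append, hf]; rfl
            rw [bumpPartial_cons_some hf']
            have hg : (row ++ [a]).getD k 0 = row.getD k 0 := List.getD_append _ _ _ _ hk
            have hs : (row ++ [a]).set k x = row.set k x ++ [a] := by
              rw [List.set_append, if_pos hk]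
            rw [hg, hb]
            simp [hs]
          | succ i =>
            rw [addBox_cons_succ, addBox_cons_succ, bumpPartial_cons_some hf,
              ih rest (row.getD k 0) T₁' t' i a hb]
            rfl
/-- extending a partial bump one more row, through a freshly added box -/
lemma bumpPartial_extend : ∀ (r : ℕ) (T : List (List ℕ)) (x : ℕ)
    (T₁ : List (List ℕ)) (t b : ℕ),
    bumpPartial T x r = some (T₁, t) → (∀ a ∈ T.getD r [], a < t) → t < b →
    bumpPartial (addBox T r b) x (r + 1) = some (addBox T₁ r t, b) := by
  intro r
  induction r with
  | zero =>
    intro T x T₁ t b h hlt htb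
    rw [bumpPartial_zero] at h
    cases h
    match T with
    | [] =>
      rw [addBox_nil]
      have hf : [b].findIdx? (fun y => decide (x < y)) = some 0 := by
        simp [List.findIdx?_cons, htb]
      rw [bumpPartial_cons_some hf, bumpPartial_zero, addBox_nil]
      simp
    | row :: rest =>
      rw [addBox_cons_zero, addBox_cons_zero]
      have hn : row.findIdx? (fun y => decide (x < y)) = none := by
        rw [List.findIdx?_eq_none_iff]
        intro a ha
        simp only [decide_eq_false_iff_not, not_lt]
        exact Nat.le_of_lt (hlt a (by simpa using ha))
      have hf : (row ++ [b]).findIdx? (fun y => decide (x < y)) = some row.length := by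
        rw [List.findIdx?_append, hn]
        simp [List.findIdx?_cons, htb]
      rw [bumpPartial_cons_some hf, bumpPartial_zero]
      have hg : (row ++ [b]).getD row.length 0 = b := by
        rw [List.getD_append_right _ _ _ _ (le_refl _)]
        simp
      have hs : (row ++ [b]).set row.length x = row ++ [x] := by
        rw [List.set_append, if_neg (by omega)]
        simp
      rw [hg, hs]
      rfl
  | succ r ih =>
    intro T x T₁ t b h hlt htb
    match T with
    | [] => simp [bumpPartial] at h
    | row :: rest =>
      cases hf : row.findIdx? (fun y => decide (x < y)) with
      | none => rw [bumpPartial_cons_none hf] at h; simp at h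
      | some k =>
        rw [bumpPartial_cons_some hf] at h
        cases hb : bumpPartial rest (row.getD k 0) r with
        | none => rw [hb] at h; simp at h
        | some Tz =>
          obtain ⟨T₁', t'⟩ := Tz
          rw [hb] at h
          simp only [Option.map_some, Option.some_inj, Prod.mk.injEq] at h
          obtain ⟨rfl, rfl⟩ := h
          rw [addBox_cons_succ, bumpPartial_cons_some hf,
            ih rest (row.getD k 0) T₁' t' b hb (fun a ha => hlt a (by simpa using ha)) htb]
          rw [addBox_cons_succ]
          rfl
lemma addBox_lt {T : List (List ℕ)} {i : ℕ} (a : ℕ) (h : i < T.length) :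
    addBox T i a = T.set i (T.getD i [] ++ [a]) := if_pos h

lemma addBox_ge {T : List (List ℕ)} {i : ℕ} (a : ℕ) (h : T.length ≤ i) :
    addBox T i a = T ++ [[a]] := if_neg (by omega)

lemma addBox_comm (T : List (List ℕ)) {i j : ℕ} (a b : ℕ) (hij : i ≠ j)
    (hi : i ≤ T.length) (hj : j ≤ T.length) :
    addBox (addBox T i a) j b = addBox (addBox T j b) i a := by
  rcases Nat.lt_or_ge i T.length with hi' | hi'
  · rcases Nat.lt_or_ge j T.length with hj' | hj'
    · rw [addBox_lt a hi', addBox_lt b (by simpa using hj'), addBox_lt b hj',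
        addBox_lt a (by simpa using hi'), getD_set_ne _ hij, getD_set_ne _ (Ne.symm hij)]
      exact List.set_comm _ _ hij
    · have hj2 : j = T.length := by omega
      subst hj2
      rw [addBox_lt a hi', addBox_ge b (by simp), addBox_ge b (le_refl _),
        addBox_lt a (by simp; omega), List.getD_append _ _ _ _ hi', List.set_append,
        if_pos hi']
  · have hi2 : i = T.length := by omega
    have hj' : j < T.length := by omega
    subst hi2
    rw [addBox_ge a (le_refl _), addBox_lt b (show j < (T ++ [[a]]).length by simp; omega),
      addBox_lt b hj', addBox_ge a (by simp), List.getD_append _ _ _ _ hj',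
      List.set_append, if_pos hj']

lemma mem_flatten_addBox {T : List (List ℕ)} {i a c : ℕ}
    (h : c ∈ (addBox T i a).flatten) : c = a ∨ c ∈ T.flatten := by
  unfold addBox at h
  split at h
  · rw [List.mem_flatten] at h
    obtain ⟨l, hl, hc⟩ := h
    rcases List.mem_or_eq_of_mem_set hl with hl' | rfl
    · exact Or.inr (List.mem_flatten.mpr ⟨l, hl', hc⟩)
    · rcases List.mem_append.mp hc with hc' | hc'
      · refine Or.inr (List.mem_flatten.mpr ⟨T.getD i [], ?_, hc'⟩)
        have : i < T.length := by assumption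
        rw [List.getD_eq_getElem?_getD, List.getElem?_eq_getElem this]
        exact List.getElem_mem _
      · exact Or.inl (by simpa using hc')
  · rw [List.flatten_append] at h
    rcases List.mem_append.mp h with h' | h'
    · exact Or.inr h'
    · exact Or.inl (by simpa using h')

lemma mem_flatten_rowInsertT : ∀ {T : List (List ℕ)} {x c : ℕ},
    c ∈ (rowInsertT T x).flatten → c = x ∨ c ∈ T.flatten := by
  intro T
  induction T with
  | nil => intro x c h; rw [rowInsertT_nil] at h; simp at h; exact Or.inl h
  | cons row rest ih =>
    intro x c h
    cases hf : row.findIdx? (fun y => decide (x < y)) with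
    | none =>
      rw [rowInsertT_cons_none hf] at h
      simp only [List.flatten_cons, List.mem_append] at h ⊢
      rcases h with (h | h) | h
      · exact Or.inr (Or.inl h)
      · exact Or.inl (by simpa using h)
      · exact Or.inr (Or.inr h)
    | some i =>
      have hi : i < row.length := (findIdx?_some_spec row i hf).1
      rw [rowInsertT_cons_some hf] at h
      simp only [List.flatten_cons, List.mem_append] at h ⊢
      rcases h with h | h
      · rcases List.mem_or_eq_of_mem_set h with h' | rfl
        · exact Or.inr (Or.inl h')
        · exact Or.inl rfl
      · rcases ih h with h' | h'
        · refine Or.inr (Or.inl ?_)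
          subst h'
          rw [List.getD_eq_getElem?_getD, List.getElem?_eq_getElem hi]
          exact List.getElem_mem _
        · exact Or.inr (Or.inr h')

/-- inserting a maximal value appends it to row 0 -/
lemma rowInsertT_max {T : List (List ℕ)} {m : ℕ} (h : ∀ a ∈ T.flatten, a < m) :
    rowInsertT T m = addBox T 0 m ∧ newBoxRow T m = 0 := by
  match T with
  | [] => exact ⟨by rw [rowInsertT_nil, addBox_nil], newBoxRow_nil m⟩
  | row :: rest =>
    have hn : row.findIdx? (fun y => decide (m < y)) = none := by
      rw [List.findIdx?_eq_none_iff]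
      intro a ha
      simp only [decide_eq_false_iff_not, not_lt]
      exact Nat.le_of_lt (h a (by simp [ha]))
    exact ⟨by rw [rowInsertT_cons_none hn, addBox_cons_zero], newBoxRow_cons_none hn _⟩
/-- Key lemma: row insertion of `x` into a tableau with an extra maximal entry `m`
sitting at the end of row `r`. The insertion proceeds as without `m`, and `m`
either stays put or (if the new box without `m` would be at row `r`) gets bumped
to the end of row `r+1`. -/
lemma rowInsertT_addBox_max : ∀ (r : ℕ) (T : List (List ℕ)) (x m : ℕ),
    (∀ a ∈ T.flatten, a < m) → x < m → r ≤ T.length →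
    rowInsertT (addBox T r m) x
      = addBox (rowInsertT T x) (if newBoxRow T x = r then r + 1 else r) m
    ∧ newBoxRow (addBox T r m) x
      = (if newBoxRow T x = r then r + 1 else newBoxRow T x) := by
  intro r
  induction r with
  | zero =>
    intro T x m hTm hxm _
    match T with
    | [] =>
      rw [addBox_nil]
      have hf : [m].findIdx? (fun y => decide (x < y)) = some 0 := by
        simp [List.findIdx?_cons, hxm]
      rw [rowInsertT_cons_some hf, newBoxRow_cons_some hf]
      simp [rowInsertT_nil, newBoxRow_nil, addBox]
    | row :: rest =>
      have hrest : ∀ a ∈ rest.flatten, a < m := fun a ha => hTm a (by simp [ha])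
      rw [addBox_cons_zero]
      cases hf : row.findIdx? (fun y => decide (x < y)) with
      | some i =>
        have hi : i < row.length := (findIdx?_some_spec row i hf).1
        have hf' : (row ++ [m]).findIdx? (fun y => decide (x < y)) = some i := by
          rw [List.findIdx?_append, hf]; rfl
        have hg : (row ++ [m]).getD i 0 = row.getD i 0 := List.getD_append _ _ _ _ hi
        have hs : (row ++ [m]).set i x = row.set i x ++ [m] := by
          rw [List.set_append, if_pos hi]
        rw [rowInsertT_cons_some hf', newBoxRow_cons_some hf', hg, hs,
          rowInsertT_cons_some hf, newBoxRow_cons_some hf]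
        rw [if_neg (by omega), if_neg (by omega), addBox_cons_zero]
        exact ⟨rfl, rfl⟩
      | none =>
        have hf' : (row ++ [m]).findIdx? (fun y => decide (x < y)) = some row.length := by
          rw [List.findIdx?_append, hf]
          simp [List.findIdx?_cons, hxm]
        have hg : (row ++ [m]).getD row.length 0 = m := by
          rw [List.getD_append_right _ _ _ _ (le_refl _)]; simp
        have hs : (row ++ [m]).set row.length x = row ++ [x] := by
          rw [List.set_append, if_neg (by omega)]; simp
        obtain ⟨hmax1, hmax2⟩ := rowInsertT_max hrest
        rw [rowInsertT_cons_some hf', newBoxRow_cons_some hf', hg, hs, hmax1, hmax2,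
          rowInsertT_cons_none hf, newBoxRow_cons_none hf]
        rw [if_pos rfl, addBox_cons_succ]
        exact ⟨rfl, rfl⟩
  | succ r ih =>
    intro T x m hTm hxm hr
    match T with
    | [] => simp at hr
    | row :: rest =>
      have hrest : ∀ a ∈ rest.flatten, a < m := fun a ha => hTm a (by simp [ha])
      have hr' : r ≤ rest.length := by simpa using hr
      rw [addBox_cons_succ]
      cases hf : row.findIdx? (fun y => decide (x < y)) with
      | none =>
        rw [rowInsertT_cons_none hf, newBoxRow_cons_none hf, rowInsertT_cons_none hf,
          newBoxRow_cons_none hf]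
        rw [if_neg (by omega), if_neg (by omega), addBox_cons_succ]
        exact ⟨rfl, rfl⟩
      | some i =>
        have hi : i < row.length := (findIdx?_some_spec row i hf).1
        have hy : row.getD i 0 < m := by
          refine hTm _ ?_
          rw [List.flatten_cons, List.mem_append]
          refine Or.inl ?_
          rw [List.getD_eq_getElem?_getD, List.getElem?_eq_getElem hi]
          exact List.getElem_mem _
        obtain ⟨ih1, ih2⟩ := ih rest (row.getD i 0) m hrest hy hr'
        rw [rowInsertT_cons_some hf, newBoxRow_cons_some hf, rowInsertT_cons_some hf,
          newBoxRow_cons_some hf, ih1, ih2]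
        by_cases hc : newBoxRow rest (row.getD i 0) = r
        · simp only [if_pos hc,
            if_pos (show newBoxRow rest (row.getD i 0) + 1 = r + 1 by omega), addBox_cons_succ]
          refine ⟨?_, ?_⟩ <;> first | rfl | trivial
        · simp only [if_neg hc,
            if_neg (show ¬ (newBoxRow rest (row.getD i 0) + 1 = r + 1) by omega), addBox_cons_succ]
          refine ⟨?_, ?_⟩ <;> first | rfl | trivial
lemma length_eq_of_shapeT {P Q : List (List ℕ)} (h : shapeT P = shapeT Q) :
    P.length = Q.length := by
  have := congrArg List.length h
  simpa [shapeT] using this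

lemma getD_addBox_ne (T : List (List ℕ)) {i j : ℕ} (a : ℕ) (hij : i ≠ j)
    (hi : i ≤ T.length) : (addBox T i a).getD j [] = T.getD j [] := by
  rcases Nat.lt_or_ge i T.length with hi' | hi'
  · rw [addBox_lt a hi', getD_set_ne _ hij]
  · have : i = T.length := by omega
    subst this
    rw [addBox_ge a (le_refl _)]
    rcases Nat.lt_or_ge j T.length with hj' | hj'
    · exact List.getD_append _ _ _ _ hj'
    · rw [List.getD_eq_default _ _ (by simp; omega), List.getD_eq_default _ _ (by omega)]

lemma mem_flatten_of_mem_getD (T : List (List ℕ)) (j a : ℕ)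
    (ha : a ∈ T.getD j []) : a ∈ T.flatten := by
  rcases Nat.lt_or_ge j T.length with hj | hj
  · refine List.mem_flatten.mpr ⟨T.getD j [], ?_, ha⟩
    rw [List.getD_eq_getElem?_getD, List.getElem?_eq_getElem hj]
    exact List.getElem_mem _
  · rw [List.getD_eq_default _ _ hj] at ha
    simp at ha

/-- The main invariant: running RSK in parallel on a word and on the same word
with an extra maximal letter `m` (labelled `s`) inserted somewhere before. -/
lemma rsk_invariant : ∀ (c : List (ℕ × ℕ)) (P Q Q₁ : List (List ℕ)) (r t s m : ℕ),
    shapeT P = shapeT Q →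
    bumpPartial Q s r = some (Q₁, t) →
    (∀ a ∈ Q.getD r [], a < t) →
    (∀ a ∈ P.flatten, a < m) →
    (∀ v ∈ c.map Prod.fst, v < m) →
    (∀ b ∈ c.map Prod.snd, t < b ∧ ∀ a ∈ Q.flatten, a < b) →
    List.Pairwise (· < ·) (c.map Prod.snd) →
    ∃ (r' t' : ℕ) (Q₁' : List (List ℕ)),
      c.foldl rskStep (addBox P r m, addBox Q₁ r t)
        = (addBox (c.foldl rskStep (P, Q)).1 r' m, addBox Q₁' r' t')
      ∧ bumpPartial (c.foldl rskStep (P, Q)).2 s r' = some (Q₁', t')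
      ∧ (∀ a ∈ (c.foldl rskStep (P, Q)).2.getD r' [], a < t') := by
  intro c
  induction c with
  | nil =>
    intro P Q Q₁ r t s m _ hb hrow _ _ _ _
    exact ⟨r, t, Q₁, rfl, hb, hrow⟩
  | cons xb c ih =>
    intro P Q Q₁ r t s m hshape hb hrow hPm hvm hlab hpair
    obtain ⟨x, b⟩ := xb
    have hxm : x < m := hvm x (by simp)
    have htb : t < b := (hlab b (by simp)).1
    have hQb : ∀ a ∈ Q.flatten, a < b := (hlab b (by simp)).2
    have hlen : P.length = Q.length := length_eq_of_shapeT hshape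
    have hrQ : r ≤ Q.length := (bumpPartial_spec r Q s Q₁ t hb).1
    have hQ₁len : Q₁.length = Q.length := (bumpPartial_spec r Q s Q₁ t hb).2
    have hiP : newBoxRow P x ≤ P.length := newBoxRow_le x P
    obtain ⟨hA1, hA2⟩ := rowInsertT_addBox_max r P x m hPm hxm (by omega)
    have hstep : rskStep (addBox P r m, addBox Q₁ r t) (x, b)
        = (addBox (rowInsertT P x) (if newBoxRow P x = r then r + 1 else r) m,
           addBox (addBox Q₁ r t) (if newBoxRow P x = r then r + 1 else newBoxRow P x) b) := by
      rw [rskStep_eq]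
      simp only [hA1, hA2]
    have hshape' : shapeT (rowInsertT P x) = shapeT (addBox Q (newBoxRow P x) b) := by
      rw [shapeT_rowInsertT, shapeT_addBox, hshape]
    have hPm' : ∀ a ∈ (rowInsertT P x).flatten, a < m := by
      intro a ha
      rcases mem_flatten_rowInsertT ha with rfl | ha'
      · exact hxm
      · exact hPm a ha'
    have hvm' : ∀ v ∈ c.map Prod.fst, v < m := fun v hv => hvm v (by simp [hv])
    have hpc : List.Pairwise (· < ·) (b :: c.map Prod.snd) := by simpa using hpair
    obtain ⟨hbfut, hpair'⟩ := List.pairwise_cons.mp hpc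
    have hbase : ((x, b) :: c).foldl rskStep (P, Q)
        = c.foldl rskStep (rowInsertT P x, addBox Q (newBoxRow P x) b) := by
      rw [List.foldl_cons, rskStep_eq]
    by_cases hc : newBoxRow P x = r
    · simp only [if_pos hc] at hstep
      have hext := bumpPartial_extend r Q s Q₁ t b hb hrow htb
      have hrow' : ∀ a ∈ (addBox Q r b).getD (r + 1) [], a < b := by
        rw [getD_addBox_ne Q b (by omega) hrQ]
        intro a ha
        exact hQb a (mem_flatten_of_mem_getD Q (r + 1) a ha)
      have hlab' : ∀ b' ∈ c.map Prod.snd, b < b' ∧ ∀ a ∈ (addBox Q r b).flatten, a < b' := by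
        intro b' hb'
        refine ⟨hbfut b' hb', fun a ha => ?_⟩
        rcases mem_flatten_addBox ha with rfl | ha'
        · exact hbfut _ hb'
        · exact (hlab b' (by simp [hb'])).2 a ha'
      obtain ⟨r', t', Q₁', h1, h2, h3⟩ := ih (rowInsertT P x) (addBox Q r b) (addBox Q₁ r t)
        (r + 1) b s m (hc ▸ hshape') hext hrow' hPm' hvm' hlab' hpair'
      refine ⟨r', t', Q₁', ?_, ?_, ?_⟩
      · rw [List.foldl_cons, hstep, h1, hbase, hc]
      · rw [hbase, hc]; exact h2
      · rw [hbase, hc]; exact h3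
    · simp only [if_neg hc] at hstep
      have hcomm : addBox (addBox Q₁ r t) (newBoxRow P x) b
          = addBox (addBox Q₁ (newBoxRow P x) b) r t :=
        addBox_comm Q₁ t b (fun h => hc h.symm) (by omega) (by omega)
      have hbp' := bumpPartial_addBox r Q s Q₁ t (newBoxRow P x) b hb
      have hrow' : ∀ a ∈ (addBox Q (newBoxRow P x) b).getD r [], a < t := by
        rw [getD_addBox_ne Q b hc (by omega)]
        exact hrow
      have hlab' : ∀ b' ∈ c.map Prod.snd, t < b' ∧
          ∀ a ∈ (addBox Q (newBoxRow P x) b).flatten, a < b' := by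
        intro b' hb'
        refine ⟨htb.trans (hbfut b' hb'), fun a ha => ?_⟩
        rcases mem_flatten_addBox ha with rfl | ha'
        · exact hbfut _ hb'
        · exact (hlab b' (by simp [hb'])).2 a ha'
      obtain ⟨r', t', Q₁', h1, h2, h3⟩ := ih (rowInsertT P x) (addBox Q (newBoxRow P x) b)
        (addBox Q₁ (newBoxRow P x) b) r t s m hshape' hbp' hrow' hPm' hvm' hlab' hpair'
      refine ⟨r', t', Q₁', ?_, ?_, ?_⟩
      · rw [List.foldl_cons, hstep, hcomm, h1, hbase]
      · rw [hbase]; exact h2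
      · rw [hbase]; exact h3
lemma rskFold_shape : ∀ (c : List (ℕ × ℕ)) (P Q : List (List ℕ)),
    shapeT P = shapeT Q →
    shapeT (c.foldl rskStep (P, Q)).1 = shapeT (c.foldl rskStep (P, Q)).2 := by
  intro c
  induction c with
  | nil => intro P Q h; exact h
  | cons xb c ih =>
    intro P Q h
    obtain ⟨x, b⟩ := xb
    rw [List.foldl_cons, rskStep_eq]
    exact ih _ _ (by rw [shapeT_rowInsertT, shapeT_addBox, h])

lemma rskFold_flatten_P : ∀ (c : List (ℕ × ℕ)) (P Q : List (List ℕ)),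
    ∀ a ∈ (c.foldl rskStep (P, Q)).1.flatten, a ∈ c.map Prod.fst ∨ a ∈ P.flatten := by
  intro c
  induction c with
  | nil => intro P Q a ha; exact Or.inr ha
  | cons xb c ih =>
    intro P Q a ha
    obtain ⟨x, b⟩ := xb
    rw [List.foldl_cons, rskStep_eq] at ha
    rcases ih _ _ a ha with h | h
    · exact Or.inl (by simp at h ⊢; tauto)
    · rcases mem_flatten_rowInsertT h with rfl | h'
      · exact Or.inl (by simp)
      · exact Or.inr h'

lemma rskFold_flatten_Q : ∀ (c : List (ℕ × ℕ)) (P Q : List (List ℕ)),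
    ∀ a ∈ (c.foldl rskStep (P, Q)).2.flatten, a ∈ c.map Prod.snd ∨ a ∈ Q.flatten := by
  intro c
  induction c with
  | nil => intro P Q a ha; exact Or.inr ha
  | cons xb c ih =>
    intro P Q a ha
    obtain ⟨x, b⟩ := xb
    rw [List.foldl_cons, rskStep_eq] at ha
    rcases ih _ _ a ha with h | h
    · exact Or.inl (by simp at h ⊢; tauto)
    · rcases mem_flatten_addBox h with rfl | h'
      · exact Or.inl (by simp)
      · exact Or.inr h'

/-- Deleting the (maximal) letter `m` with label `s` from a word: the `P`
tableau loses the box containing `m`, and conversely the full pair arises from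
the reduced pair by row-inserting `s` into `Q` and recording `m` in `P`. -/
lemma rsk_delete_max (c₁ c₂ : List (ℕ × ℕ)) (m s : ℕ)
    (hv : ∀ v ∈ (c₁ ++ c₂).map Prod.fst, v < m)
    (hlabels : List.Pairwise (· < ·) ((c₁ ++ (m, s) :: c₂).map Prod.snd)) :
    (c₁ ++ (m, s) :: c₂).foldl rskStep ([], [])
      = (addBox ((c₁ ++ c₂).foldl rskStep ([], [])).1
          (newBoxRow ((c₁ ++ c₂).foldl rskStep ([], [])).2 s) m,
         rowInsertT ((c₁ ++ c₂).foldl rskStep ([], [])).2 s) := by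
  rcases hc₁ : c₁.foldl rskStep (([], []) : List (List ℕ) × List (List ℕ)) with ⟨P, Q⟩
  rw [List.map_append, List.map_cons, List.pairwise_append] at hlabels
  obtain ⟨hpairA, hpairB, hAB⟩ := hlabels
  obtain ⟨hsB, hpairB'⟩ := List.pairwise_cons.mp hpairB
  have hPm : ∀ a ∈ P.flatten, a < m := by
    intro a ha
    rcases rskFold_flatten_P c₁ [] [] a (by rw [hc₁]; exact ha) with h | h
    · exact hv a (by simp at h ⊢; tauto)
    · simp at h
  have hQs : ∀ a ∈ Q.flatten, a ∈ c₁.map Prod.snd := by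
    intro a ha
    rcases rskFold_flatten_Q c₁ [] [] a (by rw [hc₁]; exact ha) with h | h
    · exact h
    · simp at h
  have hshape : shapeT P = shapeT Q := by
    have := rskFold_shape c₁ [] [] rfl
    rwa [hc₁] at this
  obtain ⟨hmax1, hmax2⟩ := rowInsertT_max hPm
  have hstep : rskStep (P, Q) (m, s) = (addBox P 0 m, addBox Q 0 s) := by
    rw [rskStep_eq]
    simp only [hmax1, hmax2]
  obtain ⟨r', t', Q₁', h1, h2, h3⟩ := rsk_invariant c₂ P Q Q 0 s s m hshape
    (bumpPartial_zero Q s)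
    (fun a ha => hAB a (hQs a (mem_flatten_of_mem_getD Q 0 a ha)) s (by simp))
    hPm
    (fun v hvv => hv v (by simp at hvv ⊢; tauto))
    (fun b hb => ⟨hsB b hb, fun a ha => hAB a (hQs a ha) b (by simp [hb])⟩)
    hpairB'
  have hF : (c₁ ++ c₂).foldl rskStep ([], []) = c₂.foldl rskStep (P, Q) := by
    rw [List.foldl_append, hc₁]
  obtain ⟨hins, hnb⟩ := bumpPartial_rowInsertT r' (c₂.foldl rskStep (P, Q)).2 s Q₁' t' h2 h3
  rw [List.foldl_append, hc₁, List.foldl_cons, hstep, h1, hF, hnb, hins]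
/-- **Transposition theorem**: if `d` is the two-line array obtained from `c`
by swapping the two lines (and re-sorting by the new top line = old labels),
then RSK of `d` yields the pair of `c` swapped. -/
lemma rsk_transpose : ∀ (n : ℕ) (c d : List (ℕ × ℕ)),
    c.length ≤ n →
    List.Pairwise (· < ·) (c.map Prod.snd) →
    List.Pairwise (· < ·) (d.map Prod.snd) →
    (d.map Prod.swap).Perm c →
    d.foldl rskStep ([], []) = ((c.foldl rskStep ([], [])).2, (c.foldl rskStep ([], [])).1) := by
  intro n
  induction n with
  | zero =>
    intro c d hlen _ _ hperm
    have hc : c = [] := List.eq_nil_of_length_eq_zero (by omega)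
    subst hc
    have hd : d = [] := by
      have := hperm.length_eq
      simpa using List.eq_nil_of_length_eq_zero (by simpa using this)
    subst hd
    rfl
  | succ n ih =>
    intro c d hlen hcpair hdpair hperm
    rcases List.eq_nil_or_concat d with rfl | ⟨d', sm, rfl⟩
    · have hc : c = [] := by
        have := hperm.length_eq
        exact List.eq_nil_of_length_eq_zero (by simpa using this.symm)
      subst hc
      rfl
    · obtain ⟨s, m⟩ := sm
      simp only [List.concat_eq_append] at hdpair hperm ⊢
      -- (m, s) is a member of c
      have hmem : (m, s) ∈ c := hperm.mem_iff.mp (by simp)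
      obtain ⟨c₁, c₂, rfl⟩ := List.append_of_mem hmem
      -- basic perms
      have hp1 : (c₁ ++ (m, s) :: c₂).Perm ((m, s) :: (c₁ ++ c₂)) := List.perm_middle
      have hp2 : ((d' ++ [(s, m)]).map Prod.swap).Perm ((m, s) :: d'.map Prod.swap) := by
        rw [List.map_append]
        simpa using List.perm_append_singleton _ _
      have hperm' : (d'.map Prod.swap).Perm (c₁ ++ c₂) :=
        (hp2.symm.trans (hperm.trans hp1)).cons_inv
      -- label facts for d
      have hdlab : List.Pairwise (· < ·) (d'.map Prod.snd ++ [m]) := by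
        simpa using hdpair
      rw [List.pairwise_append] at hdlab
      obtain ⟨hd'pair, _, hd'm⟩ := hdlab
      -- all values of c₁ ++ c₂ are < m
      have hv : ∀ v ∈ (c₁ ++ c₂).map Prod.fst, v < m := by
        intro v hvv
        have : v ∈ (d'.map Prod.swap).map Prod.fst := by
          rw [(hperm'.map Prod.fst).mem_iff]
          exact hvv
        have : v ∈ d'.map Prod.snd := by
          simpa [Function.comp] using this
        exact hd'm v this m (by simp)
      -- labels of c₁ ++ c₂ pairwise
      have hcpair' : List.Pairwise (· < ·) ((c₁ ++ c₂).map Prod.snd) := by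
        refine hcpair.sublist (List.Sublist.map _ ?_)
        exact (List.sublist_cons_self _ _).append_left c₁
      -- length for IH
      have hlen' : (c₁ ++ c₂).length ≤ n := by
        have := hperm.length_eq
        simp at hlen ⊢
        simp at this
        omega
      have IH := ih (c₁ ++ c₂) d' hlen' hcpair' hd'pair hperm'
      have hdel := rsk_delete_max c₁ c₂ m s hv hcpair
      rcases hF : (c₁ ++ c₂).foldl rskStep (([], []) : List (List ℕ) × List (List ℕ))
        with ⟨A, B⟩
      rw [hF] at IH hdel
      rw [hdel, List.foldl_append, IH, List.foldl_cons, List.foldl_nil, rskStep_eq]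
lemma finRange_map_val (n : ℕ) : (List.finRange n).map Fin.val = List.range n := by
  ext1 i
  simp [List.getElem?_map]

lemma map_perm_finRange {m : ℕ} (π : Equiv.Perm (Fin m)) :
    ((List.finRange m).map π).Perm (List.finRange m) := by
  refine List.perm_of_nodup_nodup_toFinset_eq
    ((List.nodup_finRange m).map π.injective) (List.nodup_finRange m) ?_
  ext j
  simp only [List.mem_toFinset, List.mem_map, List.mem_finRange, true_and, iff_true]
  exact ⟨π⁻¹ j, π.apply_symm_apply j⟩

theorem rsk_symmetry' (m : ℕ) (π : Equiv.Perm (Fin m)) :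
    rskPQ (permList π⁻¹) = ((rskPQ (permList π)).2, (rskPQ (permList π)).1) := by
  have hlen : ∀ (σ : Equiv.Perm (Fin m)), (permList σ).length = m := by
    intro σ; simp [permList]
  have hr : List.range' 1 m = (List.finRange m).map (fun i : Fin m => (i : ℕ) + 1) := by
    rw [List.range'_eq_map_range, ← finRange_map_val, List.map_map]
    congr 1
    funext i
    simp [Nat.add_comm]
  have hzip : ∀ (σ : Equiv.Perm (Fin m)),
      (permList σ).zip (List.range' 1 (permList σ).length)
        = (List.finRange m).map (fun i : Fin m => ((σ i : ℕ) + 1, (i : ℕ) + 1)) := by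
    intro σ
    rw [hlen, permList, hr, List.zip_map']
  have hswap : (((permList π⁻¹).zip (List.range' 1 (permList π⁻¹).length)).map Prod.swap).Perm
      ((permList π).zip (List.range' 1 (permList π).length)) := by
    rw [hzip, hzip, List.map_map]
    have : (Prod.swap ∘ fun j : Fin m => ((π⁻¹ j : ℕ) + 1, (j : ℕ) + 1))
        = (fun i : Fin m => ((π i : ℕ) + 1, (i : ℕ) + 1)) ∘ (π⁻¹ : Equiv.Perm (Fin m)) := by
      funext j
      simp [Prod.swap, show π (π⁻¹ j) = j from π.apply_symm_apply j]
    rw [this, ← List.map_map]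
    exact (map_perm_finRange π⁻¹).map _
  have hpair : ∀ (σ : Equiv.Perm (Fin m)),
      List.Pairwise (· < ·)
        (((permList σ).zip (List.range' 1 (permList σ).length)).map Prod.snd) := by
    intro σ
    have : ((permList σ).zip (List.range' 1 (permList σ).length)).map Prod.snd
        = List.range' 1 m := by
      rw [hzip, List.map_map, hr]
      rfl
    rw [this]
    exact List.pairwise_lt_range' (s := 1) (n := m)
  have := rsk_transpose m _ _ (by simp [List.length_zip, hlen]) (hpair π)
    (hpair π⁻¹) hswap
  exact this

end Dev

/-- **Symmetry Theorem for RSK.** If `π` is a permutation of `[m]` with RSK pair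
`(P(π), Q(π))`, then `P(π⁻¹) = Q(π)` and `Q(π⁻¹) = P(π)`. -/
theorem rsk_symmetry (m : ℕ) (π : Equiv.Perm (Fin m)) :
    (rskPQ (permList π⁻¹)).1 = (rskPQ (permList π)).2 ∧
    (rskPQ (permList π⁻¹)).2 = (rskPQ (permList π)).1 := by
  rw [rsk_symmetry' m π]
  exact ⟨rfl, rfl⟩
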